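/- Hardy's paradox in any dimension: let |ψ⟩ ∈ ℂ^d⊗ℂ^d be a pure bipartite state that is nonseparable and less-than-maximally entangled, in the sense that its Schmidt coefficients include two distinct nonzero values. Then there exist POVMs (E_{a|x})_{a∈{0,1}} on ℂ^d for x∈{0,1} and (F_{b|y})_{b∈{0,1}} on ℂ^d for y∈{0,1} such that the correlations P(a,b|x,y) = ⟨ψ|(E_{a|x}⊗F_{b|y})|ψ⟩ satisfy P(0,0|0,0) > 0 and P(0,1|0,1) = P(1,0|1,0) = P(0,0|1,1) = 0. -/

import Mathlib

open Matrix Finset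
open scoped ComplexOrder

attribute [local instance] Classical.propDecidable

noncomputable section

/-- The rank-one matrix `|v⟩⟨v|` associated to a vector `v`. -/
def vecProj {D : Type*} [Fintype D] (v : D → ℂ) : Matrix D D ℂ :=
  Matrix.of fun i j => v i * star (v j)

/-- `v` is a unit vector. -/
def UnitVec {D : Type*} [Fintype D] (v : D → ℂ) : Prop :=
  ∑ i, star (v i) * v i = 1

/-- A quantum state: positive semidefinite matrix of trace one. -/
def IsState {D : Type*} [Fintype D] [DecidableEq D] (ρ : Matrix D D ℂ) : Prop :=
  ρ.PosSemidef ∧ ρ.trace = 1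

/-- The probability `⟨ψ| (Ea ⊗ Fb) |ψ⟩`. -/
def pairProb {d : ℕ} (ψ : Fin d × Fin d → ℂ)
    (Ea Fb : Matrix (Fin d) (Fin d) ℂ) : ℂ :=
  ∑ q : Fin d × Fin d, ∑ q' : Fin d × Fin d,
    star (ψ q) * Ea q.1 q'.1 * Fb q.2 q'.2 * ψ q'

/-- `lam` is a family of Schmidt coefficients of `ψ`: there are orthonormal families
`u`, `v` with `ψ = ∑ᵢ √(lam i) uᵢ ⊗ vᵢ`. -/
def SchmidtDecompOf {d : ℕ} (ψ : Fin d × Fin d → ℂ) (lam : Fin d → ℝ) : Prop :=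
  ∃ u v : Fin d → Fin d → ℂ,
    (∀ i j, ∑ k, star (u i k) * u j k = if i = j then 1 else 0) ∧
    (∀ i j, ∑ k, star (v i k) * v j k = if i = j then 1 else 0) ∧
    (∀ i, 0 ≤ lam i) ∧
    ∀ q, ψ q = ∑ i, ((Real.sqrt (lam i) : ℝ) : ℂ) * u i q.1 * v i q.2

lemma vecProj_posSemidef {D : Type*} [Fintype D] [DecidableEq D] (e : D → ℂ) :
    (vecProj e).PosSemidef := by
  have : vecProj e = (Matrix.of (fun (_ : Fin 1) j => star (e j)))ᴴ *
      (Matrix.of (fun (_ : Fin 1) j => star (e j))) := by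
    ext i j
    simp [vecProj, Matrix.mul_apply, Matrix.conjTranspose_apply]
  rw [this]
  exact Matrix.posSemidef_conjTranspose_mul_self _

lemma vecProj_mul_self {D : Type*} [Fintype D] [DecidableEq D] {e : D → ℂ}
    (he : UnitVec e) : vecProj e * vecProj e = vecProj e := by
  ext i j
  simp only [vecProj, Matrix.mul_apply, Matrix.of_apply]
  calc ∑ k, (e i * star (e k)) * (e k * star (e j))
      = (e i * star (e j)) * ∑ k, star (e k) * e k := by
        rw [Finset.mul_sum]; exact Finset.sum_congr rfl fun k _ => by ring
    _ = e i * star (e j) := by rw [he, mul_one]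

lemma one_sub_vecProj_posSemidef {D : Type*} [Fintype D] [DecidableEq D] {e : D → ℂ}
    (he : UnitVec e) : (1 - vecProj e).PosSemidef := by
  have hherm : (vecProj e)ᴴ = vecProj e := by
    ext i j; simp [vecProj, Matrix.conjTranspose_apply]; ring
  have : (1 - vecProj e) = (1 - vecProj e)ᴴ * (1 - vecProj e) := by
    rw [Matrix.conjTranspose_sub, Matrix.conjTranspose_one, hherm]
    rw [Matrix.sub_mul, Matrix.mul_sub, Matrix.mul_sub, vecProj_mul_self he]
    simp
  rw [this]
  exact Matrix.posSemidef_conjTranspose_mul_self _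

lemma pairProb_proj {d : ℕ} (ψ : Fin d × Fin d → ℂ) (e f : Fin d → ℂ) :
    pairProb ψ (vecProj e) (vecProj f)
      = (∑ q, star (ψ q) * e q.1 * f q.2) * star (∑ q, star (ψ q) * e q.1 * f q.2) := by
  rw [star_sum, Finset.sum_mul_sum]
  unfold pairProb vecProj
  refine Finset.sum_congr rfl fun q _ => Finset.sum_congr rfl fun q' _ => ?_
  simp only [Matrix.of_apply, star_mul', star_star]
  ring

lemma pairProb_sub_right {d : ℕ} (ψ : Fin d × Fin d → ℂ) (E F F' : Matrix (Fin d) (Fin d) ℂ) :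
    pairProb ψ E (F - F') = pairProb ψ E F - pairProb ψ E F' := by
  unfold pairProb
  rw [← Finset.sum_sub_distrib]
  refine Finset.sum_congr rfl fun q _ => ?_
  rw [← Finset.sum_sub_distrib]
  refine Finset.sum_congr rfl fun q' _ => ?_
  simp [Matrix.sub_apply]; ring

lemma pairProb_sub_left {d : ℕ} (ψ : Fin d × Fin d → ℂ) (E E' F : Matrix (Fin d) (Fin d) ℂ) :
    pairProb ψ (E - E') F = pairProb ψ E F - pairProb ψ E' F := by
  unfold pairProb
  rw [← Finset.sum_sub_distrib]
  refine Finset.sum_congr rfl fun q _ => ?_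
  rw [← Finset.sum_sub_distrib]
  refine Finset.sum_congr rfl fun q' _ => ?_
  simp [Matrix.sub_apply]; ring

lemma pairProb_one_right {d : ℕ} (ψ : Fin d × Fin d → ℂ) (e : Fin d → ℂ) :
    pairProb ψ (vecProj e) 1
      = ∑ k, (∑ m, star (ψ (m,k)) * e m) * star (∑ m, star (ψ (m,k)) * e m) := by
  have rhs : ∀ k : Fin d, (∑ m, star (ψ (m,k)) * e m) * star (∑ m, star (ψ (m,k)) * e m)
      = ∑ m, ∑ m', (star (ψ (m,k)) * e m) * (ψ (m',k) * star (e m')) := by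
    intro k
    rw [star_sum, Finset.sum_mul_sum]
    refine Finset.sum_congr rfl fun m _ => Finset.sum_congr rfl fun m' _ => ?_
    simp only [star_mul', star_star]; try ring
  simp only [rhs]
  unfold pairProb vecProj
  rw [Fintype.sum_prod_type]
  rw [Finset.sum_comm]
  refine Finset.sum_congr rfl fun k _ => ?_
  refine Finset.sum_congr rfl fun m _ => ?_
  rw [Fintype.sum_prod_type]
  rw [Finset.sum_comm]
  have : ∀ k' : Fin d, ∑ m', star (ψ (m,k)) * (Matrix.of fun i j => e i * star (e j)) m m'
        * (1 : Matrix (Fin d) (Fin d) ℂ) k k' * ψ (m',k')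
      = if k' = k then ∑ m', (star (ψ (m,k)) * e m) * (ψ (m',k) * star (e m')) else 0 := by
    intro k'
    by_cases h : k' = k
    · subst h
      simp only [if_true, Matrix.one_apply_eq]
      refine Finset.sum_congr rfl fun m' _ => ?_
      simp only [Matrix.of_apply]; try ring
    · rw [if_neg h]
      refine Finset.sum_eq_zero fun m' _ => ?_
      rw [Matrix.one_apply, if_neg (fun hh : k = k' => h hh.symm)]
      ring
  rw [Finset.sum_congr rfl fun k' _ => this k']
  simp

lemma pairProb_one_left {d : ℕ} (ψ : Fin d × Fin d → ℂ) (f : Fin d → ℂ) :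
    pairProb ψ 1 (vecProj f)
      = ∑ m, (∑ k, star (ψ (m,k)) * f k) * star (∑ k, star (ψ (m,k)) * f k) := by
  have rhs : ∀ m : Fin d, (∑ k, star (ψ (m,k)) * f k) * star (∑ k, star (ψ (m,k)) * f k)
      = ∑ k, ∑ k', (star (ψ (m,k)) * f k) * (ψ (m,k') * star (f k')) := by
    intro m
    rw [star_sum, Finset.sum_mul_sum]
    refine Finset.sum_congr rfl fun k _ => Finset.sum_congr rfl fun k' _ => ?_
    simp only [star_mul', star_star]; try ring
  simp only [rhs]
  unfold pairProb vecProj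
  rw [Fintype.sum_prod_type]
  refine Finset.sum_congr rfl fun m _ => ?_
  refine Finset.sum_congr rfl fun k _ => ?_
  rw [Fintype.sum_prod_type]
  have : ∀ m' : Fin d, ∑ k', star (ψ (m,k)) * (1 : Matrix (Fin d) (Fin d) ℂ) m m'
        * (Matrix.of fun i j => f i * star (f j)) k k' * ψ (m',k')
      = if m' = m then ∑ k', (star (ψ (m,k)) * f k) * (ψ (m,k') * star (f k')) else 0 := by
    intro m'
    by_cases h : m' = m
    · subst h
      simp only [if_true, Matrix.one_apply_eq]
      refine Finset.sum_congr rfl fun k' _ => ?_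
      simp only [Matrix.of_apply]; try ring
    · rw [if_neg h]
      refine Finset.sum_eq_zero fun k' _ => ?_
      rw [Matrix.one_apply, if_neg (fun hh : m = m' => h hh.symm)]
      ring
  rw [Finset.sum_congr rfl fun m' _ => this m']
  simp

variable {d : ℕ} {u v : Fin d → Fin d → ℂ} {lam : Fin d → ℝ} {ψ : Fin d × Fin d → ℂ}
  {i j : Fin d}
variable {d : ℕ} {u v : Fin d → Fin d → ℂ} {lam : Fin d → ℝ} {ψ : Fin d × Fin d → ℂ}
  {i j : Fin d}

lemma inner_combo (hu : ∀ i j, ∑ k, star (u i k) * u j k = if i = j then 1 else 0)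
    (i j k : Fin d) (α β : ℝ) :
    ∑ m, star (u k m) * ((α:ℂ) * u i m + (β:ℂ) * u j m)
      = (if k = i then (α:ℂ) else 0) + (if k = j then (β:ℂ) else 0) := by
  calc ∑ m, star (u k m) * ((α:ℂ) * u i m + (β:ℂ) * u j m)
      = (α:ℂ) * ∑ m, star (u k m) * u i m + (β:ℂ) * ∑ m, star (u k m) * u j m := by
        rw [Finset.mul_sum, Finset.mul_sum, ← Finset.sum_add_distrib]
        exact Finset.sum_congr rfl fun m _ => by ring
    _ = _ := by rw [hu k i, hu k j]; simp [mul_ite]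

lemma unit_combo (hu : ∀ i j, ∑ k, star (u i k) * u j k = if i = j then 1 else 0)
    (hij : i ≠ j) {α β : ℝ} (h : α^2 + β^2 = 1) :
    UnitVec (fun m => (α:ℂ) * u i m + (β:ℂ) * u j m) := by
  unfold UnitVec
  have expand : ∀ m : Fin d, star ((α:ℂ) * u i m + (β:ℂ) * u j m) * ((α:ℂ) * u i m + (β:ℂ) * u j m)
      = (α:ℂ)*(α:ℂ)*(star (u i m) * u i m) + (α:ℂ)*(β:ℂ)*(star (u i m) * u j m)
        + (β:ℂ)*(α:ℂ)*(star (u j m) * u i m) + (β:ℂ)*(β:ℂ)*(star (u j m) * u j m) := by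
    intro m
    simp only [star_add, star_mul', Complex.star_def, Complex.conj_ofReal]
    ring
  simp only [expand, Finset.sum_add_distrib, ← Finset.mul_sum, hu i i, hu i j, hu j i, hu j j,
    if_pos rfl, if_neg hij, if_neg (Ne.symm hij)]
  push_cast
  rw [← Complex.ofReal_mul, ← Complex.ofReal_mul]
  norm_cast
  nlinarith [h]

lemma norm_combo (hv : ∀ i j, ∑ k, star (v i k) * v j k = if i = j then 1 else 0)
    (hij : i ≠ j) (A B : ℂ) :
    ∑ k, (A * star (v i k) + B * star (v j k)) * star (A * star (v i k) + B * star (v j k))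
      = A * star A + B * star B := by
  have expand : ∀ k : Fin d,
      (A * star (v i k) + B * star (v j k)) * star (A * star (v i k) + B * star (v j k))
      = A*star A*(star (v i k) * v i k) + A*star B*(star (v i k) * v j k)
        + B*star A*(star (v j k) * v i k) + B*star B*(star (v j k) * v j k) := by
    intro k
    simp only [star_add, star_mul', star_star]
    ring
  simp only [expand, Finset.sum_add_distrib, ← Finset.mul_sum, hv i i, hv i j, hv j i, hv j j,
    if_pos rfl, if_neg hij, if_neg (Ne.symm hij)]
  simp
  try ring

lemma star_psi (hrep : ∀ q, ψ q = ∑ p, ((Real.sqrt (lam p) : ℝ) : ℂ) * u p q.1 * v p q.2)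
    (q : Fin d × Fin d) :
    star (ψ q) = ∑ p, ((Real.sqrt (lam p) : ℝ) : ℂ) * star (u p q.1) * star (v p q.2) := by
  rw [hrep, star_sum]
  refine Finset.sum_congr rfl fun p _ => ?_
  simp only [star_mul', Complex.star_def, Complex.conj_ofReal]
  try ring

lemma S_eval (hu : ∀ i j, ∑ k, star (u i k) * u j k = if i = j then 1 else 0)
    (hv : ∀ i j, ∑ k, star (v i k) * v j k = if i = j then 1 else 0)
    (hrep : ∀ q, ψ q = ∑ p, ((Real.sqrt (lam p) : ℝ) : ℂ) * u p q.1 * v p q.2)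
    (hij : i ≠ j) (α β γ δ : ℝ) :
    ∑ q : Fin d × Fin d, star (ψ q) * ((α:ℂ) * u i q.1 + (β:ℂ) * u j q.1)
        * ((γ:ℂ) * v i q.2 + (δ:ℂ) * v j q.2)
      = ((Real.sqrt (lam i) : ℝ) : ℂ) * (α*γ) + ((Real.sqrt (lam j) : ℝ) : ℂ) * (β*δ) := by
  set c : Fin d → ℂ := fun p => ((Real.sqrt (lam p) : ℝ) : ℂ) with hc
  set E : Fin d → ℂ := fun m => (α:ℂ) * u i m + (β:ℂ) * u j m with hE
  set F : Fin d → ℂ := fun n => (γ:ℂ) * v i n + (δ:ℂ) * v j n with hF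
  calc ∑ q : Fin d × Fin d, star (ψ q) * E q.1 * F q.2
      = ∑ q : Fin d × Fin d, ∑ p, c p * star (u p q.1) * star (v p q.2) * E q.1 * F q.2 := by
        refine Finset.sum_congr rfl fun q _ => ?_
        rw [star_psi hrep q, Finset.sum_mul, Finset.sum_mul]
    _ = ∑ p, ∑ q : Fin d × Fin d, c p * star (u p q.1) * star (v p q.2) * E q.1 * F q.2 :=
        Finset.sum_comm
    _ = ∑ p, c p * ((∑ m, star (u p m) * E m) * (∑ n, star (v p n) * F n)) := by
        refine Finset.sum_congr rfl fun p _ => ?_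
        rw [Fintype.sum_prod_type, Finset.sum_mul_sum, Finset.mul_sum]
        refine Finset.sum_congr rfl fun m _ => ?_
        rw [Finset.mul_sum]
        refine Finset.sum_congr rfl fun n _ => by ring
    _ = ∑ p, c p * (((if p = i then (α:ℂ) else 0) + (if p = j then (β:ℂ) else 0))
          * ((if p = i then (γ:ℂ) else 0) + (if p = j then (δ:ℂ) else 0))) := by
        refine Finset.sum_congr rfl fun p _ => ?_
        rw [hE, hF, inner_combo hu, inner_combo hv]
    _ = ∑ p, ((if p = i then c i * (α*γ) else 0) + (if p = j then c j * (β*δ) else 0)) := by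
        refine Finset.sum_congr rfl fun p _ => ?_
        by_cases h1 : p = i
        · subst h1; simp [hij]; try push_cast; try ring
        · by_cases h2 : p = j
          · subst h2; simp [h1]; try push_cast; try ring
          · simp [h1, h2]
    _ = c i * (α*γ) + c j * (β*δ) := by
        rw [Finset.sum_add_distrib]
        simp [Finset.sum_ite_eq']

lemma T_eval (hu : ∀ i j, ∑ k, star (u i k) * u j k = if i = j then 1 else 0)
    (hrep : ∀ q, ψ q = ∑ p, ((Real.sqrt (lam p) : ℝ) : ℂ) * u p q.1 * v p q.2)
    (hij : i ≠ j) (α β : ℝ) (k : Fin d) :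
    ∑ m, star (ψ (m,k)) * ((α:ℂ) * u i m + (β:ℂ) * u j m)
      = ((Real.sqrt (lam i) : ℝ) : ℂ) * α * star (v i k)
        + ((Real.sqrt (lam j) : ℝ) : ℂ) * β * star (v j k) := by
  set c : Fin d → ℂ := fun p => ((Real.sqrt (lam p) : ℝ) : ℂ) with hc
  set E : Fin d → ℂ := fun m => (α:ℂ) * u i m + (β:ℂ) * u j m with hE
  calc ∑ m, star (ψ (m,k)) * E m
      = ∑ m, ∑ p, c p * star (u p m) * star (v p k) * E m := by
        refine Finset.sum_congr rfl fun m _ => ?_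
        rw [star_psi hrep (m,k), Finset.sum_mul]
    _ = ∑ p, c p * star (v p k) * ∑ m, star (u p m) * E m := by
        rw [Finset.sum_comm]
        refine Finset.sum_congr rfl fun p _ => ?_
        rw [Finset.mul_sum]
        refine Finset.sum_congr rfl fun m _ => by ring
    _ = ∑ p, c p * star (v p k) * ((if p = i then (α:ℂ) else 0) + (if p = j then (β:ℂ) else 0)) := by
        refine Finset.sum_congr rfl fun p _ => ?_
        rw [hE, inner_combo hu]
    _ = ∑ p, ((if p = i then c i * α * star (v i k) else 0)
          + (if p = j then c j * β * star (v j k) else 0)) := by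
        refine Finset.sum_congr rfl fun p _ => ?_
        by_cases h1 : p = i
        · subst h1; simp [hij]; try push_cast; try ring
        · by_cases h2 : p = j
          · subst h2; simp [h1]; try push_cast; try ring
          · simp [h1, h2]
    _ = _ := by rw [Finset.sum_add_distrib]; simp [Finset.sum_ite_eq']; rfl

lemma R_eval (hv : ∀ i j, ∑ k, star (v i k) * v j k = if i = j then 1 else 0)
    (hrep : ∀ q, ψ q = ∑ p, ((Real.sqrt (lam p) : ℝ) : ℂ) * u p q.1 * v p q.2)
    (hij : i ≠ j) (γ δ : ℝ) (m : Fin d) :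
    ∑ k, star (ψ (m,k)) * ((γ:ℂ) * v i k + (δ:ℂ) * v j k)
      = ((Real.sqrt (lam i) : ℝ) : ℂ) * γ * star (u i m)
        + ((Real.sqrt (lam j) : ℝ) : ℂ) * δ * star (u j m) := by
  set c : Fin d → ℂ := fun p => ((Real.sqrt (lam p) : ℝ) : ℂ) with hc
  set F : Fin d → ℂ := fun n => (γ:ℂ) * v i n + (δ:ℂ) * v j n with hF
  calc ∑ k, star (ψ (m,k)) * F k
      = ∑ k, ∑ p, c p * star (u p m) * star (v p k) * F k := by
        refine Finset.sum_congr rfl fun k _ => ?_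
        rw [star_psi hrep (m,k), Finset.sum_mul]
    _ = ∑ p, c p * star (u p m) * ∑ k, star (v p k) * F k := by
        rw [Finset.sum_comm]
        refine Finset.sum_congr rfl fun p _ => ?_
        rw [Finset.mul_sum]
        refine Finset.sum_congr rfl fun k _ => by ring
    _ = ∑ p, c p * star (u p m) * ((if p = i then (γ:ℂ) else 0) + (if p = j then (δ:ℂ) else 0)) := by
        refine Finset.sum_congr rfl fun p _ => ?_
        rw [hF, inner_combo hv]
    _ = ∑ p, ((if p = i then c i * γ * star (u i m) else 0)
          + (if p = j then c j * δ * star (u j m) else 0)) := by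
        refine Finset.sum_congr rfl fun p _ => ?_
        by_cases h1 : p = i
        · subst h1; simp [hij]; try push_cast; try ring
        · by_cases h2 : p = j
          · subst h2; simp [h1]; try push_cast; try ring
          · simp [h1, h2]
    _ = _ := by rw [Finset.sum_add_distrib]; simp [Finset.sum_ite_eq']; rfl

lemma prob_pp (hu : ∀ i j, ∑ k, star (u i k) * u j k = if i = j then 1 else 0)
    (hv : ∀ i j, ∑ k, star (v i k) * v j k = if i = j then 1 else 0)
    (hrep : ∀ q, ψ q = ∑ p, ((Real.sqrt (lam p) : ℝ) : ℂ) * u p q.1 * v p q.2)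
    (hij : i ≠ j) (α β γ δ : ℝ) :
    pairProb ψ (vecProj (fun m => (α:ℂ) * u i m + (β:ℂ) * u j m))
        (vecProj (fun n => (γ:ℂ) * v i n + (δ:ℂ) * v j n))
      = (((Real.sqrt (lam i) * (α*γ) + Real.sqrt (lam j) * (β*δ))^2 : ℝ) : ℂ) := by
  rw [pairProb_proj]
  have hS : (∑ q : Fin d × Fin d, star (ψ q) * (fun m => (α:ℂ) * u i m + (β:ℂ) * u j m) q.1
        * (fun n => (γ:ℂ) * v i n + (δ:ℂ) * v j n) q.2)
      = (((Real.sqrt (lam i) * (α*γ) + Real.sqrt (lam j) * (β*δ) : ℝ)) : ℂ) := by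
    rw [show (∑ q : Fin d × Fin d, star (ψ q) * (fun m => (α:ℂ) * u i m + (β:ℂ) * u j m) q.1
        * (fun n => (γ:ℂ) * v i n + (δ:ℂ) * v j n) q.2)
      = ∑ q : Fin d × Fin d, star (ψ q) * ((α:ℂ) * u i q.1 + (β:ℂ) * u j q.1)
        * ((γ:ℂ) * v i q.2 + (δ:ℂ) * v j q.2) from rfl]
    rw [S_eval hu hv hrep hij]
    push_cast; ring
  rw [hS, Complex.star_def, Complex.conj_ofReal]
  norm_cast
  ring

lemma prob_p_onesub (hu : ∀ i j, ∑ k, star (u i k) * u j k = if i = j then 1 else 0)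
    (hv : ∀ i j, ∑ k, star (v i k) * v j k = if i = j then 1 else 0)
    (hrep : ∀ q, ψ q = ∑ p, ((Real.sqrt (lam p) : ℝ) : ℂ) * u p q.1 * v p q.2)
    (hij : i ≠ j) (α β γ δ : ℝ) :
    pairProb ψ (vecProj (fun m => (α:ℂ) * u i m + (β:ℂ) * u j m))
        (1 - vecProj (fun n => (γ:ℂ) * v i n + (δ:ℂ) * v j n))
      = ((((Real.sqrt (lam i) * α)^2 + (Real.sqrt (lam j) * β)^2
          - (Real.sqrt (lam i) * (α*γ) + Real.sqrt (lam j) * (β*δ))^2 : ℝ)) : ℂ) := by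
  rw [pairProb_sub_right, prob_pp hu hv hrep hij, pairProb_one_right]
  have hT : ∀ k : Fin d, (∑ m, star (ψ (m,k)) * (fun m => (α:ℂ) * u i m + (β:ℂ) * u j m) m)
      = ((Real.sqrt (lam i) : ℝ) : ℂ) * α * star (v i k)
        + ((Real.sqrt (lam j) : ℝ) : ℂ) * β * star (v j k) := fun k => T_eval hu hrep hij α β k
  simp only [hT]
  rw [norm_combo hv hij]
  have : (((Real.sqrt (lam i) : ℝ) : ℂ) * α) * star (((Real.sqrt (lam i) : ℝ) : ℂ) * α)
      + (((Real.sqrt (lam j) : ℝ) : ℂ) * β) * star (((Real.sqrt (lam j) : ℝ) : ℂ) * β)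
      = ((((Real.sqrt (lam i) * α)^2 + (Real.sqrt (lam j) * β)^2 : ℝ)) : ℂ) := by
    simp only [star_mul', Complex.star_def, Complex.conj_ofReal]
    push_cast; ring
  rw [this]
  push_cast; ring

lemma prob_onesub_p (hu : ∀ i j, ∑ k, star (u i k) * u j k = if i = j then 1 else 0)
    (hv : ∀ i j, ∑ k, star (v i k) * v j k = if i = j then 1 else 0)
    (hrep : ∀ q, ψ q = ∑ p, ((Real.sqrt (lam p) : ℝ) : ℂ) * u p q.1 * v p q.2)
    (hij : i ≠ j) (α β γ δ : ℝ) :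
    pairProb ψ (1 - vecProj (fun m => (α:ℂ) * u i m + (β:ℂ) * u j m))
        (vecProj (fun n => (γ:ℂ) * v i n + (δ:ℂ) * v j n))
      = ((((Real.sqrt (lam i) * γ)^2 + (Real.sqrt (lam j) * δ)^2
          - (Real.sqrt (lam i) * (α*γ) + Real.sqrt (lam j) * (β*δ))^2 : ℝ)) : ℂ) := by
  rw [pairProb_sub_left, prob_pp hu hv hrep hij, pairProb_one_left]
  have hR : ∀ m : Fin d, (∑ k, star (ψ (m,k)) * (fun n => (γ:ℂ) * v i n + (δ:ℂ) * v j n) k)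
      = ((Real.sqrt (lam i) : ℝ) : ℂ) * γ * star (u i m)
        + ((Real.sqrt (lam j) : ℝ) : ℂ) * δ * star (u j m) := fun m => R_eval hv hrep hij γ δ m
  simp only [hR]
  rw [norm_combo hu hij]
  have : (((Real.sqrt (lam i) : ℝ) : ℂ) * γ) * star (((Real.sqrt (lam i) : ℝ) : ℂ) * γ)
      + (((Real.sqrt (lam j) : ℝ) : ℂ) * δ) * star (((Real.sqrt (lam j) : ℝ) : ℂ) * δ)
      = ((((Real.sqrt (lam i) * γ)^2 + (Real.sqrt (lam j) * δ)^2 : ℝ)) : ℂ) := by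
    simp only [star_mul', Complex.star_def, Complex.conj_ofReal]
    push_cast; ring
  rw [this]
  push_cast; ring

lemma build {d : ℕ} (ψ : Fin d × Fin d → ℂ) (A0 A1 B0 B1 : Matrix (Fin d) (Fin d) ℂ)
    (hA0 : A0.PosSemidef) (hA0' : (1 - A0).PosSemidef)
    (hA1 : A1.PosSemidef) (hA1' : (1 - A1).PosSemidef)
    (hB0 : B0.PosSemidef) (hB0' : (1 - B0).PosSemidef)
    (hB1 : B1.PosSemidef) (hB1' : (1 - B1).PosSemidef)
    (hd : 0 < pairProb ψ A0 B0)
    (ha : pairProb ψ A0 (1 - B1) = 0)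
    (hb : pairProb ψ (1 - A1) B0 = 0)
    (hc : pairProb ψ A1 B1 = 0) :
    ∃ (E F : Fin 2 → Fin 2 → Matrix (Fin d) (Fin d) ℂ),
      (∀ x a, (E x a).PosSemidef) ∧ (∀ x, ∑ a, E x a = 1) ∧
      (∀ y b, (F y b).PosSemidef) ∧ (∀ y, ∑ b, F y b = 1) ∧
      0 < pairProb ψ (E 0 0) (F 0 0) ∧
      pairProb ψ (E 0 0) (F 1 1) = 0 ∧
      pairProb ψ (E 1 1) (F 0 0) = 0 ∧
      pairProb ψ (E 1 0) (F 1 0) = 0 := by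
  refine ⟨![![A0, 1 - A0], ![A1, 1 - A1]], ![![B0, 1 - B0], ![B1, 1 - B1]],
    ?_, ?_, ?_, ?_, ?_, ?_, ?_, ?_⟩
  · intro x a
    fin_cases x <;> fin_cases a <;> simpa using by assumption
  · intro x
    fin_cases x <;> simp [Fin.sum_univ_two] <;> abel
  · intro y b
    fin_cases y <;> fin_cases b <;> simpa using by assumption
  · intro y
    fin_cases y <;> simp [Fin.sum_univ_two] <;> abel
  · simpa using hd
  · simpa using ha
  · simpa using hb
  · simpa using hc


theorem hardy_paradox_any_dimension (d : ℕ) (ψ : Fin d × Fin d → ℂ) (hψ : UnitVec ψ)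
    (hent : ¬ ∃ (α β : Fin d → ℂ), ∀ q : Fin d × Fin d, ψ q = α q.1 * β q.2)
    (hltm : ∃ lam : Fin d → ℝ, SchmidtDecompOf ψ lam ∧
      ∃ i j : Fin d, 0 < lam i ∧ 0 < lam j ∧ lam i ≠ lam j) :
    ∃ (E F : Fin 2 → Fin 2 → Matrix (Fin d) (Fin d) ℂ),
      (∀ x a, (E x a).PosSemidef) ∧ (∀ x, ∑ a, E x a = 1) ∧
      (∀ y b, (F y b).PosSemidef) ∧ (∀ y, ∑ b, F y b = 1) ∧
      0 < pairProb ψ (E 0 0) (F 0 0) ∧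
      pairProb ψ (E 0 0) (F 1 1) = 0 ∧
      pairProb ψ (E 1 1) (F 0 0) = 0 ∧
      pairProb ψ (E 1 0) (F 1 0) = 0 := by
  obtain ⟨lam, hdec, i, j, hi, hj, hlij⟩ := hltm
  obtain ⟨u, v, hu, hv, hlam0, hrep⟩ := hdec
  have hij : i ≠ j := fun h => hlij (by rw [h])
  set sa := Real.sqrt (Real.sqrt (lam i)) with hsa_def
  set sb := Real.sqrt (Real.sqrt (lam j)) with hsb_def
  have hsa : 0 < sa := Real.sqrt_pos.mpr (Real.sqrt_pos.mpr hi)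
  have hsb : 0 < sb := Real.sqrt_pos.mpr (Real.sqrt_pos.mpr hj)
  have hsla : Real.sqrt (lam i) = sa^2 := by
    rw [hsa_def]; exact (Real.sq_sqrt (Real.sqrt_nonneg _)).symm
  have hslb : Real.sqrt (lam j) = sb^2 := by
    rw [hsb_def]; exact (Real.sq_sqrt (Real.sqrt_nonneg _)).symm
  have hsab : sa ≠ sb := by
    intro h
    apply hlij
    have h2 : Real.sqrt (lam i) = Real.sqrt (lam j) := by rw [hsla, hslb, h]
    have h3 := congrArg (fun t => t^2) h2
    simpa [Real.sq_sqrt hi.le, Real.sq_sqrt hj.le] using h3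
  set sN := Real.sqrt (sa^6 + sb^6) with hsN_def
  set sM := Real.sqrt (sa^2 + sb^2) with hsM_def
  have hNpos : (0:ℝ) < sa^6 + sb^6 := by positivity
  have hMpos : (0:ℝ) < sa^2 + sb^2 := by positivity
  have hsN : 0 < sN := Real.sqrt_pos.mpr hNpos
  have hsM : 0 < sM := Real.sqrt_pos.mpr hMpos
  have hsN2 : sN^2 = sa^6 + sb^6 := Real.sq_sqrt hNpos.le
  have hsM2 : sM^2 = sa^2 + sb^2 := Real.sq_sqrt hMpos.le
  have hu_e0 : UnitVec (fun m => ((sb^3/sN : ℝ):ℂ) * u i m + ((sa^3/sN : ℝ):ℂ) * u j m) := by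
    refine unit_combo hu hij ?_
    have h1 : (sb^3/sN)^2 + (sa^3/sN)^2 = (sa^6 + sb^6)/sN^2 := by ring
    rw [h1, hsN2, div_self hNpos.ne']
  have hu_e1 : UnitVec (fun m => ((sb/sM : ℝ):ℂ) * u i m + ((-(sa/sM) : ℝ):ℂ) * u j m) := by
    refine unit_combo hu hij ?_
    have h1 : (sb/sM)^2 + (-(sa/sM))^2 = (sa^2 + sb^2)/sM^2 := by ring
    rw [h1, hsM2, div_self hMpos.ne']
  have hv_f0 : UnitVec (fun n => ((sb^3/sN : ℝ):ℂ) * v i n + ((-(sa^3/sN) : ℝ):ℂ) * v j n) := by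
    refine unit_combo hv hij ?_
    have h1 : (sb^3/sN)^2 + (-(sa^3/sN))^2 = (sa^6 + sb^6)/sN^2 := by ring
    rw [h1, hsN2, div_self hNpos.ne']
  have hv_f1 : UnitVec (fun n => ((sb/sM : ℝ):ℂ) * v i n + ((sa/sM : ℝ):ℂ) * v j n) := by
    refine unit_combo hv hij ?_
    have h1 : (sb/sM)^2 + (sa/sM)^2 = (sa^2 + sb^2)/sM^2 := by ring
    rw [h1, hsM2, div_self hMpos.ne']
  refine build ψ
      (vecProj (fun m => ((sb^3/sN : ℝ):ℂ) * u i m + ((sa^3/sN : ℝ):ℂ) * u j m))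
      (vecProj (fun m => ((sb/sM : ℝ):ℂ) * u i m + ((-(sa/sM) : ℝ):ℂ) * u j m))
      (vecProj (fun n => ((sb^3/sN : ℝ):ℂ) * v i n + ((-(sa^3/sN) : ℝ):ℂ) * v j n))
      (vecProj (fun n => ((sb/sM : ℝ):ℂ) * v i n + ((sa/sM : ℝ):ℂ) * v j n))
      (vecProj_posSemidef _) (one_sub_vecProj_posSemidef hu_e0)
      (vecProj_posSemidef _) (one_sub_vecProj_posSemidef hu_e1)
      (vecProj_posSemidef _) (one_sub_vecProj_posSemidef hv_f0)
      (vecProj_posSemidef _) (one_sub_vecProj_posSemidef hv_f1)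
      ?_ ?_ ?_ ?_
  · -- positivity
    rw [prob_pp hu hv hrep hij, hsla, hslb]
    rw [Complex.zero_lt_real]
    have hval : sa^2 * ((sb^3/sN) * (sb^3/sN)) + sb^2 * ((sa^3/sN) * (-(sa^3/sN)))
        = sa^2*sb^2*(sb^4 - sa^4)/sN^2 := by field_simp; ring
    have h44 : sb^4 - sa^4 ≠ 0 := by
      rcases hsab.lt_or_gt with h | h
      · have h4 : sa^4 < sb^4 := by
          have := pow_lt_pow_left₀ h hsa.le (by norm_num : (4:ℕ) ≠ 0)
          simpa using this
        exact sub_ne_zero.mpr h4.ne'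
      · have h4 : sb^4 < sa^4 := by
          have := pow_lt_pow_left₀ h hsb.le (by norm_num : (4:ℕ) ≠ 0)
          simpa using this
        exact sub_ne_zero.mpr h4.ne
    have hne : sa^2 * ((sb^3/sN) * (sb^3/sN)) + sb^2 * ((sa^3/sN) * (-(sa^3/sN))) ≠ 0 := by
      rw [hval]
      exact div_ne_zero (mul_ne_zero (mul_ne_zero (pow_ne_zero _ hsa.ne')
        (pow_ne_zero _ hsb.ne')) h44) (pow_ne_zero _ hsN.ne')
    positivity
  · -- P(0,1|0,1) = 0
    rw [prob_p_onesub hu hv hrep hij, hsla, hslb, Complex.ofReal_eq_zero]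
    have e1 : (sa^2*(sb^3/sN))^2 + (sb^2*(sa^3/sN))^2 = sa^4*sb^4*(sa^2+sb^2)/sN^2 := by
      field_simp; ring
    have e2 : (sa^2*((sb^3/sN)*(sb/sM)) + sb^2*((sa^3/sN)*(sa/sM)))^2
        = (sa^4*sb^4*(sa^2+sb^2)^2)/(sN^2*sM^2) := by
      field_simp; ring
    rw [e1, e2, hsM2]
    field_simp
    ring
  · -- P(1,0|1,0) = 0
    rw [prob_onesub_p hu hv hrep hij, hsla, hslb, Complex.ofReal_eq_zero]
    have e1 : (sa^2*(sb^3/sN))^2 + (sb^2*(-(sa^3/sN)))^2 = sa^4*sb^4*(sa^2+sb^2)/sN^2 := by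
      field_simp; ring
    have e2 : (sa^2*((sb/sM)*(sb^3/sN)) + sb^2*((-(sa/sM))*(-(sa^3/sN))))^2
        = (sa^4*sb^4*(sa^2+sb^2)^2)/(sN^2*sM^2) := by
      field_simp; ring
    rw [e1, e2, hsM2]
    field_simp
    ring
  · -- P(0,0|1,1) = 0
    rw [prob_pp hu hv hrep hij, hsla, hslb, Complex.ofReal_eq_zero]
    have h0 : sa^2 * ((sb/sM) * (sb/sM)) + sb^2 * ((-(sa/sM)) * (sa/sM)) = 0 := by
      field_simp
      ring
    rw [h0]
    norm_num
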